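/- In the finite-dimensional Schrödinger system setup, suppose C = E† ∘ E_{p₀} ∘ E ∘ E_{p₁} where E is a positive linear map with adjoint E†, E_{p₀}(u) = ρ₀/u and E_{p₁}(u) = ρ₁/u are componentwise division maps with ρ₀, ρ₁ fixed positive vectors satisfying ⟨u, E_{p₀}(u)⟩ = 1 and ⟨E_{p₁}(u), u⟩ = 1 for all strictly positive u (i.e., Σᵢ ρ₀ᵢ = Σᵢ ρ₁ᵢ = 1 in the appropriate pairing). If h is a strictly positive vector with C(h) = λh for some λ > 0, then λ = 1. -/

import Mathlib

open Matrix Finset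

/-- in the discrete Schrödinger system, with
`C = E† ∘ E_{ρ₀} ∘ E ∘ E_{ρ₁}` (componentwise divisions by positive
probability vectors `ρ₀, ρ₁`), any positive eigenvector of `C` has
eigenvalue `λ = 1`. -/
theorem schroedinger_iteration_eigenvalue_one
    {n : ℕ} (Q : Matrix (Fin n) (Fin n) ℝ)
    (hQ : ∀ i j, 0 < Q i j)
    (ρ₀ ρ₁ : Fin n → ℝ) (hρ₀ : ∀ i, 0 < ρ₀ i) (hρ₁ : ∀ i, 0 < ρ₁ i)
    (hρ₀sum : ∑ i, ρ₀ i = 1) (hρ₁sum : ∑ i, ρ₁ i = 1)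
    (h : Fin n → ℝ) (hpos : ∀ i, 0 < h i)
    (lam : ℝ) (hlam : 0 < lam)
    (heig : Qᵀ.mulVec
        (fun i => ρ₀ i / (Q.mulVec (fun j => ρ₁ j / h j)) i) = lam • h) :
    lam = 1 := by
  rcases Nat.eq_zero_or_pos n with hn | hn
  · subst hn; simp at hρ₀sum
  set u : Fin n → ℝ := fun j => ρ₁ j / h j with hu
  set v : Fin n → ℝ := fun i => ρ₀ i / (Q.mulVec u) i with hv
  have hQu : ∀ i, 0 < (Q.mulVec u) i := by
    intro i
    rw [Matrix.mulVec, dotProduct]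
    apply Finset.sum_pos
    · intro j _
      exact mul_pos (hQ i j) (div_pos (hρ₁ j) (hpos j))
    · exact ⟨⟨0, hn⟩, Finset.mem_univ _⟩
  have key : u ⬝ᵥ (Qᵀ.mulVec v) = v ⬝ᵥ (Q.mulVec u) := by
    rw [Matrix.dotProduct_mulVec, Matrix.dotProduct_mulVec,
      Matrix.vecMul_transpose, ← Matrix.dotProduct_mulVec,
      dotProduct_comm]
  have lhs : u ⬝ᵥ (Qᵀ.mulVec v) = 1 := by
    rw [key]
    have : ∀ i, v i * (Q.mulVec u) i = ρ₀ i := by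
      intro i
      rw [hv]
      field_simp [(hQu i).ne']
    simp only [dotProduct]
    rw [Finset.sum_congr rfl fun i _ => this i, hρ₀sum]
  have rhs : u ⬝ᵥ (lam • h) = lam := by
    simp only [dotProduct, Pi.smul_apply, smul_eq_mul, hu]
    have : ∀ i, ρ₁ i / h i * (lam * h i) = lam * ρ₁ i := by
      intro i; field_simp [(hpos i).ne']
    rw [Finset.sum_congr rfl fun i _ => this i, ← Finset.mul_sum, hρ₁sum, mul_one]
  rw [heig, rhs] at lhs
  exact lhs
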